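/- For every n >= 2, there is an explicit bijection psi between the set of GDAP of length n bounded between y = 0 and y = 2 and the set of compositions of n - 2 in which no two consecutive parts have the same parity; psi is obtained by deleting the first and last step, cutting the remaining path after each up-step followed by another up-step or by a D_2-step, and recording the lengths of the resulting blocks. -/

import Mathlib

open PowerSeries

/-- A valid step sequence: each step is an up-step `1` or a down-step `-k` (`k ≥ 1`),
and no two down-steps are consecutive. -/
def GoodSteps (p : List ℤ) : Prop :=
  (∀ s ∈ p, s = 1 ∨ s ≤ -1) ∧ List.Chain' (fun a b => a = 1 ∨ b = 1) p

/-- A Dyck path with air pockets: nonempty, valid steps, ends on the x-axis,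
stays weakly above the x-axis. -/
def IsDAP (p : List ℤ) : Prop :=
  p ≠ [] ∧ GoodSteps p ∧ p.sum = 0 ∧ ∀ i, 0 ≤ (p.take i).sum

/-- A grand Dyck path with air pockets: valid steps, ends on the x-axis
(possibly going below it); the empty path is allowed. -/
def IsGDAP (p : List ℤ) : Prop := GoodSteps p ∧ p.sum = 0

/-- Number of DAP of length `n`. -/
noncomputable def dapCount (n : ℕ) : ℕ :=
  Nat.card {p : List ℤ // IsDAP p ∧ p.length = n}

/-- All points of the path have ordinate in `[0,2]`. -/
def Bounded02 (p : List ℤ) : Prop := ∀ i, 0 ≤ (p.take i).sum ∧ (p.take i).sum ≤ 2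

/-- `c` is a composition of `m`. -/
def IsComposition (c : List ℕ) (m : ℕ) : Prop := (∀ x ∈ c, 0 < x) ∧ c.sum = m

/-- No two consecutive parts have the same parity. -/
def AltParity (c : List ℕ) : Prop := List.Chain' (fun a b => a % 2 ≠ b % 2) c

/-- The cutting positions of a step sequence `l`: we cut after each up-step which is
followed by another up-step or by a `D₂`-step. -/
def cutsSet (l : List ℤ) : Set ℕ :=
  {s | 0 < s ∧ s < l.length ∧ l[s - 1]? = some 1 ∧ (l[s]? = some 1 ∨ l[s]? = some (-2))}

/-- `c` is the composition recording the lengths of the blocks of `l` obtained by cutting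
`l` at exactly the positions of `cutsSet l`: its parts are positive, they sum to the
length of `l`, and its proper nonempty prefix sums are exactly the cutting positions. -/
def CutComp (l : List ℤ) (c : List ℕ) : Prop :=
  IsComposition c l.length ∧
  ∀ s : ℕ, (∃ t, t <+: c ∧ t ≠ [] ∧ t ≠ c ∧ t.sum = s) ↔ s ∈ cutsSet l

@[simp] theorem List.chain'_nil {α : Type*} {R : α → α → Prop} : List.Chain' R [] :=
  List.isChain_nil

@[simp] theorem List.chain'_singleton {α : Type*} {R : α → α → Prop} (a : α) :
    List.Chain' R [a] :=
  List.isChain_singleton a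

@[simp] theorem List.chain'_cons {α : Type*} {R : α → α → Prop} {x y : α} {l : List α} :
    List.Chain' R (x :: y :: l) ↔ R x y ∧ List.Chain' R (y :: l) :=
  List.isChain_cons_cons

theorem List.chain'_cons' {α : Type*} {R : α → α → Prop} {x : α} {l : List α} :
    List.Chain' R (x :: l) ↔ (∀ y ∈ l.head?, R x y) ∧ List.Chain' R l :=
  List.isChain_cons

theorem List.chain'_append {α : Type*} {R : α → α → Prop} {l₁ l₂ : List α} :
    List.Chain' R (l₁ ++ l₂) ↔ List.Chain' R l₁ ∧ List.Chain' R l₂ ∧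
      ∀ x ∈ l₁.getLast?, ∀ y ∈ l₂.head?, R x y :=
  List.isChain_append

theorem List.Chain'.tail {α : Type*} {R : α → α → Prop} {l : List α} (h : List.Chain' R l) :
    List.Chain' R l.tail :=
  List.IsChain.tail h

namespace S13

/-- Step relation: no two consecutive down-steps. -/
def R (a b : ℤ) : Prop := a = 1 ∨ b = 1

/-- Alternating word of length `n` starting with `a`. -/
def alt : ℤ → ℕ → List ℤ
  | _, 0 => []
  | a, n + 1 => a :: alt (-a) n

/-- The block of size `m` (odd block, or first/later even block). -/
def blk (first : Bool) (m : ℕ) : List ℤ :=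
  if m % 2 = 1 then alt 1 m else if first then alt (-1) m else -2 :: alt 1 (m - 1)

/-- The inner word of the path decoding a composition. -/
def body : Bool → List ℕ → List ℤ
  | _, [] => []
  | first, m :: r => blk first m ++ body false r

/-- The full decoded path. -/
def decode (c : List ℕ) : List ℤ := 1 :: body true c ++ [-(1 + (body true c).sum)]

/-- The block lengths of the cut decomposition of a word. -/
def enc : List ℤ → List ℕ
  | [] => []
  | [_] => [1]
  | a :: b :: l =>
    if a = 1 ∧ (b = 1 ∨ b = -2) then 1 :: enc (b :: l)
    else match enc (b :: l) with
      | [] => [1]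
      | h :: t => (h + 1) :: t

@[simp] theorem alt_zero (a : ℤ) : alt a 0 = [] := rfl
@[simp] theorem alt_succ (a : ℤ) (n : ℕ) : alt a (n + 1) = a :: alt (-a) n := rfl

theorem alt_two (a : ℤ) (n : ℕ) : alt a (n + 2) = a :: -a :: alt a n := by
  simp [alt]

@[simp] theorem alt_length (a : ℤ) (n : ℕ) : (alt a n).length = n := by
  induction n generalizing a with
  | zero => rfl
  | succ n ih => simp [alt, ih]

theorem alt_ne_nil (a : ℤ) (n : ℕ) (h : 0 < n) : alt a n ≠ [] := by
  cases n with
  | zero => omega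
  | succ n => simp [alt]

theorem alt_head (a : ℤ) (n : ℕ) (h : 0 < n) : (alt a n).head? = some a := by
  cases n with
  | zero => omega
  | succ n => simp [alt]

theorem alt_sum (a : ℤ) (n : ℕ) : (alt a n).sum = if n % 2 = 1 then a else 0 := by
  induction n using Nat.strong_induction_on generalizing a with
  | _ n ih =>
    match n with
    | 0 => simp
    | 1 => simp [alt]
    | n + 2 =>
      rw [alt_two]
      simp only [List.sum_cons, ih n (by omega)]
      have : (n + 2) % 2 = n % 2 := by omega
      rw [this]; ring

theorem alt_take (a : ℤ) (n i : ℕ) : (alt a n).take i = alt a (min i n) := by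
  induction n generalizing a i with
  | zero => simp
  | succ n ih =>
    cases i with
    | zero => simp
    | succ i =>
      simp only [alt_succ, List.take_succ_cons, ih]
      have : min (i+1) (n+1) = min i n + 1 := by omega
      rw [this, alt_succ]

theorem alt_getLast (a : ℤ) (n : ℕ) (h : n % 2 = 1) : (alt a n).getLast? = some a := by
  induction n using Nat.strong_induction_on generalizing a with
  | _ n ih =>
    match n with
    | 0 => omega
    | 1 => simp [alt]
    | n + 2 =>
      rw [alt_two]
      rw [List.getLast?_cons_cons, List.getLast?_cons]
      cases n with
      | zero => omega
      | succ n =>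
        have := ih (n+1) (by omega) a (by omega)
        simp only [this]
        cases alt a (n+1) <;> simp_all [List.getLast?_cons]

theorem alt_mem (a x : ℤ) (n : ℕ) (h : x ∈ alt a n) : x = a ∨ x = -a := by
  induction n generalizing a with
  | zero => simp at h
  | succ n ih =>
    simp only [alt_succ, List.mem_cons] at h
    rcases h with h | h
    · exact Or.inl h
    · rcases ih (-a) h with h | h
      · exact Or.inr h
      · simp at h; exact Or.inl h

theorem alt_chain' (a : ℤ) (ha : a = 1 ∨ a = -1) (n : ℕ) : List.Chain' R (alt a n) := by
  induction n using Nat.strong_induction_on generalizing a with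
  | _ n ih =>
    match n with
    | 0 => simp [List.chain'_nil]
    | 1 => simp [alt]
    | n + 2 =>
      rw [alt_two]
      cases n with
      | zero =>
        rcases ha with h | h <;> subst h <;> simp [List.chain'_cons, R]
      | succ n =>
        rw [List.chain'_cons]
        constructor
        · rcases ha with h | h <;> subst h <;> simp [R]
        · have := ih (n + 2) (by omega) (-a) (by omega)
          rw [alt_succ] at this
          simpa using this

end S13
namespace S13

theorem blk_length (f : Bool) (m : ℕ) (hm : 0 < m) : (blk f m).length = m := by
  unfold blk
  by_cases h : m % 2 = 1
  · simp [h]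
  · simp only [h, if_false]
    cases f <;> simp <;> omega

theorem blk_ne_nil (f : Bool) (m : ℕ) (hm : 0 < m) : blk f m ≠ [] := by
  intro h
  have := blk_length f m hm
  rw [h] at this
  simp at this
  omega

theorem blk_getLast (f : Bool) (m : ℕ) (hm : 0 < m) : (blk f m).getLast? = some 1 := by
  unfold blk
  by_cases h : m % 2 = 1
  · simp only [h, if_true]
    exact alt_getLast 1 m h
  · simp only [h, if_false]
    cases f
    · simp only [Bool.false_eq_true, if_false]
      rw [List.getLast?_cons]
      have h1 : (m - 1) % 2 = 1 := by omega
      rw [alt_getLast 1 (m-1) h1]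
      cases halt : alt 1 (m-1) with
      | nil => exfalso; exact alt_ne_nil 1 (m-1) (by omega) halt
      | cons a l => rw [halt] at *; simp_all [List.getLast?_cons]
    · simp only [if_true]
      have : m % 2 = 1 ∨ (m ≠ 0 ∧ m % 2 = 0) := by omega
      -- alt (-1) m with m even > 0 ends with -(-1) = 1
      -- prove via: getLast? (alt a n) = some (-a) when n % 2 = 0, n > 0
      have key : ∀ n a, n % 2 = 0 → 0 < n → (alt a n).getLast? = some (-a) := by
        intro n
        induction n using Nat.strong_induction_on with
        | _ n ih =>
          intro a hn hp
          match n, hp with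
          | 1, _ => omega
          | 2, _ => simp [alt]
          | (n+3), _ =>
            rw [show (n+3) = (n+1)+2 from rfl, alt_two, List.getLast?_cons_cons]
            have := ih (n+1) (by omega) a (by omega) (by omega)
            rw [List.getLast?_cons, this]
            cases alt a (n+1) <;> simp_all [List.getLast?_cons]
      have := key m (-1) (by omega) hm
      simpa using this

theorem blk_sum (f : Bool) (m : ℕ) (hm : 0 < m) :
    (blk f m).sum = if m % 2 = 1 then 1 else if f then 0 else -1 := by
  unfold blk
  by_cases h : m % 2 = 1
  · simp [h, alt_sum]
  · simp only [h, if_false]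
    cases f
    · simp only [Bool.false_eq_true, if_false, List.sum_cons]
      rw [alt_sum]
      have : (m - 1) % 2 = 1 := by omega
      simp [this]
    · simp [alt_sum, h]

theorem blk_mem (f : Bool) (m : ℕ) (x : ℤ) (hx : x ∈ blk f m) : x = 1 ∨ x ≤ -1 := by
  unfold blk at hx
  by_cases h : m % 2 = 1 <;> simp only [h, if_true, if_false] at hx
  · rcases alt_mem _ _ _ hx with h | h <;> omega
  · cases f <;> simp_all
    · rcases hx with h | h
      · omega
      · rcases alt_mem _ _ _ h with h | h <;> omega
    · rcases alt_mem _ _ _ hx with h | h <;> omega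

theorem blk_chain' (f : Bool) (m : ℕ) : List.Chain' R (blk f m) := by
  unfold blk
  by_cases h : m % 2 = 1 <;> simp only [h, if_true, if_false]
  · exact alt_chain' 1 (by omega) m
  · cases f <;> simp only [Bool.false_eq_true, if_false, if_true]
    · cases hm : m - 1 with
      | zero => simp [List.chain'_cons, R]
      | succ k =>
        rw [alt_succ, List.chain'_cons]
        refine ⟨Or.inr rfl, ?_⟩
        have := alt_chain' 1 (by omega) (k+1)
        rwa [alt_succ] at this
    · exact alt_chain' (-1) (by omega) m

theorem blk_head (f : Bool) (m : ℕ) (hm : 0 < m) :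
    (blk f m).head? = some (if m % 2 = 1 then 1 else if f then -1 else -2) := by
  unfold blk
  by_cases h : m % 2 = 1 <;> simp only [h, if_true, if_false]
  · exact alt_head 1 m hm
  · cases f <;> simp
    exact alt_head (-1) m hm

theorem blk_take_sum (f : Bool) (m : ℕ) (i : ℕ) :
    (if m % 2 = 1 then (0:ℤ) else if f then -1 else -2) ≤ ((blk f m).take i).sum ∧
    ((blk f m).take i).sum ≤ if m % 2 = 1 then 1 else 0 := by
  unfold blk
  by_cases h : m % 2 = 1 <;> simp only [h, if_true, if_false]
  · rw [alt_take, alt_sum]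
    by_cases h2 : (min i m) % 2 = 1 <;> simp [h2]
  · cases f <;> simp only [Bool.false_eq_true, if_false, if_true]
    · cases i with
      | zero => simp
      | succ i =>
        simp only [List.take_succ_cons, List.sum_cons]
        rw [alt_take, alt_sum]
        by_cases h2 : (min i (m-1)) % 2 = 1 <;> simp [h2] <;> omega
    · rw [alt_take, alt_sum]
      by_cases h2 : (min i m) % 2 = 1 <;> simp [h2]

end S13
namespace S13

/-- Consistency of a start state `(f, h)` with a composition. -/
def stOk (f : Bool) (h : ℤ) (c : List ℕ) : Prop :=
  (f = true → h = 1) ∧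
  (f = false → match c with
    | [] => h = 1 ∨ h = 2
    | m :: _ => (h = 1 ∧ m % 2 = 1) ∨ (h = 2 ∧ m % 2 = 0))

theorem stOk_cases (f : Bool) (h : ℤ) (m : ℕ) (r : List ℕ) (hst : stOk f h (m :: r)) :
    (h = 1 ∧ m % 2 = 1) ∨ (f = true ∧ h = 1 ∧ m % 2 = 0) ∨ (f = false ∧ h = 2 ∧ m % 2 = 0) := by
  obtain ⟨h1, h2⟩ := hst
  cases f
  · rcases h2 rfl with ⟨a, b⟩ | ⟨a, b⟩
    · exact Or.inl ⟨a, b⟩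
    · exact Or.inr (Or.inr ⟨rfl, a, b⟩)
  · exact if hp : m % 2 = 1 then Or.inl ⟨h1 rfl, hp⟩
      else Or.inr (Or.inl ⟨rfl, h1 rfl, by omega⟩)

theorem stOk_next (f : Bool) (h : ℤ) (m : ℕ) (r : List ℕ) (hst : stOk f h (m :: r))
    (halt : AltParity (m :: r)) (hm : 0 < m) :
    stOk false (h + (blk f m).sum) r := by
  rw [blk_sum f m hm]
  have hh := stOk_cases f h m r hst
  refine ⟨by simp, fun _ => ?_⟩
  match r with
  | [] =>
    simp only []
    rcases hh with ⟨a,b⟩|⟨_,a,b⟩|⟨_,a,b⟩ <;> subst a <;> simp_all <;> omega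
  | m2 :: r2 =>
    have hpar : m % 2 ≠ m2 % 2 := (List.chain'_cons.mp halt).1
    simp only []
    rcases hh with ⟨a,b⟩|⟨hf,a,b⟩|⟨hf,a,b⟩ <;> subst a <;> (try subst hf) <;>
      simp only [b, if_true, if_false] <;> simp <;> omega

theorem body_length (f : Bool) (c : List ℕ) (hpos : ∀ x ∈ c, 0 < x) :
    (body f c).length = c.sum := by
  induction c generalizing f with
  | nil => rfl
  | cons m r ih =>
    simp only [body, List.length_append, List.sum_cons]
    rw [blk_length f m (hpos m (by simp)), ih false (fun x hx => hpos x (by simp [hx]))]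

theorem body_mem (f : Bool) (c : List ℕ) (x : ℤ) (hx : x ∈ body f c) : x = 1 ∨ x ≤ -1 := by
  induction c generalizing f with
  | nil => simp [body] at hx
  | cons m r ih =>
    simp only [body, List.mem_append] at hx
    rcases hx with h | h
    · exact blk_mem f m x h
    · exact ih false h

theorem body_getLast (f : Bool) (c : List ℕ) (hpos : ∀ x ∈ c, 0 < x) (hne : c ≠ []) :
    (body f c).getLast? = some 1 := by
  induction c generalizing f with
  | nil => simp at hne
  | cons m r ih =>
    simp only [body, List.getLast?_append]
    cases r with
    | nil =>
      simp [body, blk_getLast f m (hpos m (by simp))]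
    | cons m2 r2 =>
      rw [ih false (fun x hx => hpos x (by simp [hx])) (by simp)]
      simp

theorem body_head_false (c : List ℕ) (hpos : ∀ x ∈ c, 0 < x) :
    body false c = [] ∨ (body false c).head? = some 1 ∨ (body false c).head? = some (-2) := by
  cases c with
  | nil => exact Or.inl rfl
  | cons m r =>
    right
    simp only [body]
    rw [List.head?_append_of_ne_nil _ (blk_ne_nil false m (hpos m (by simp)))]
    rw [blk_head false m (hpos m (by simp))]
    by_cases h : m % 2 = 1 <;> simp [h]

theorem body_chain' (f : Bool) (c : List ℕ) (hpos : ∀ x ∈ c, 0 < x) :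
    List.Chain' R (body f c) := by
  induction c generalizing f with
  | nil => simp [body]
  | cons m r ih =>
    simp only [body]
    rw [List.chain'_append]
    refine ⟨blk_chain' f m, ih false (fun x hx => hpos x (by simp [hx])), ?_⟩
    intro x hx y _
    rw [blk_getLast f m (hpos m (by simp))] at hx
    simp at hx
    exact Or.inl hx.symm

theorem body_bounded (c : List ℕ) (f : Bool) (h : ℤ) (hst : stOk f h c)
    (hpos : ∀ x ∈ c, 0 < x) (halt : AltParity c) :
    ∀ i, 0 ≤ h + ((body f c).take i).sum ∧ h + ((body f c).take i).sum ≤ 2 := by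
  induction c generalizing f h with
  | nil =>
    intro i
    have : h = 1 ∨ h = 2 := by
      obtain ⟨h1, h2⟩ := hst
      cases f
      · exact h2 rfl
      · exact Or.inl (h1 rfl)
    simp only [body, List.take_nil, List.sum_nil]
    omega
  | cons m r ih =>
    intro i
    have hm : 0 < m := hpos m (by simp)
    have hh := stOk_cases f h m r hst
    simp only [body, List.take_append, List.sum_append]
    have hb := blk_take_sum f m i
    by_cases hi : i ≤ (blk f m).length
    · rw [show i - (blk f m).length = 0 by omega]
      simp only [List.take_zero, List.sum_nil, add_zero]
      rcases hh with ⟨a,b⟩|⟨hf,a,b⟩|⟨hf,a,b⟩ <;> subst a <;> (try subst hf) <;>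
        rw [b] at hb <;> simp at hb <;> omega
    · rw [List.take_of_length_le (by omega)]
      have hsum : (blk f m).sum = if m % 2 = 1 then 1 else if f then 0 else -1 :=
        blk_sum f m hm
      have hnext := stOk_next f h m r hst halt hm
      have ihh := ih false (h + (blk f m).sum) hnext
        (fun x hx => hpos x (by simp [hx])) halt.tail (i - (blk f m).length)
      omega

theorem body_sum (c : List ℕ) (f : Bool) (h : ℤ) (hst : stOk f h c)
    (hpos : ∀ x ∈ c, 0 < x) (halt : AltParity c) :
    h + (body f c).sum = 1 ∨ h + (body f c).sum = 2 := by
  induction c generalizing f h with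
  | nil =>
    obtain ⟨h1, h2⟩ := hst
    cases f
    · simpa [body] using h2 rfl
    · simp [body, h1 rfl]
  | cons m r ih =>
    have hm : 0 < m := hpos m (by simp)
    have hnext := stOk_next f h m r hst halt hm
    have := ih false (h + (blk f m).sum) hnext (fun x hx => hpos x (by simp [hx])) halt.tail
    simpa [body, add_assoc] using this

end S13
namespace S13

theorem stOk_true (c : List ℕ) : stOk true 1 c :=
  ⟨fun _ => rfl, fun h => by simp at h⟩

theorem decode_sum (c : List ℕ) : (decode c).sum = 0 := by
  simp [decode]

theorem decode_ne_nil (c : List ℕ) : decode c ≠ [] := by simp [decode]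

theorem decode_length (c : List ℕ) (hpos : ∀ x ∈ c, 0 < x) :
    (decode c).length = c.sum + 2 := by
  simp [decode, body_length true c hpos]

theorem decode_good (c : List ℕ) (hpos : ∀ x ∈ c, 0 < x) (halt : AltParity c) :
    GoodSteps (decode c) := by
  have hS := body_sum c true 1 (stOk_true c) hpos halt
  constructor
  · intro s hs
    simp only [decode, List.cons_append, List.mem_cons, List.mem_append,
      List.mem_singleton] at hs
    rcases hs with h | h | h | h
    · exact Or.inl h
    · exact body_mem true c s h
    · subst h; right; omega
    · simp at h
  · simp only [decode, List.cons_append]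
    rw [List.chain'_cons']
    constructor
    · intro y _; exact Or.inl rfl
    · rw [List.chain'_append]
      refine ⟨body_chain' true c hpos, by simp, ?_⟩
      intro x hx y hy
      by_cases hc : c = []
      · subst hc; simp [body] at hx
      · rw [body_getLast true c hpos hc] at hx
        simp at hx
        exact Or.inl hx.symm

theorem decode_bounded (c : List ℕ) (hpos : ∀ x ∈ c, 0 < x) (halt : AltParity c) :
    Bounded02 (decode c) := by
  have hS := body_sum c true 1 (stOk_true c) hpos halt
  have hB := body_bounded c true 1 (stOk_true c) hpos halt
  intro i
  cases i with
  | zero => simp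
  | succ j =>
    simp only [decode, List.cons_append, List.take_succ_cons, List.sum_cons,
      List.take_append, List.sum_append]
    by_cases hj : j ≤ (body true c).length
    · rw [show j - (body true c).length = 0 by omega]
      simp only [List.take_zero, List.sum_nil, add_zero]
      have := hB j
      omega
    · rw [List.take_of_length_le (by omega),
        List.take_of_length_le (by simp; omega)]
      simp

/-- decoded path's inner word. -/
theorem decode_inner (c : List ℕ) : (decode c).tail.dropLast = body true c := by
  simp only [decode, List.cons_append, List.tail_cons, List.dropLast_concat]

@[simp] theorem enc_nil : enc [] = [] := rfl
@[simp] theorem enc_single (a : ℤ) : enc [a] = [1] := rfl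

theorem enc_cut (a b : ℤ) (l : List ℤ) (h : a = 1 ∧ (b = 1 ∨ b = -2)) :
    enc (a :: b :: l) = 1 :: enc (b :: l) := by
  rw [enc, if_pos h]

theorem enc_nocut (a b : ℤ) (l : List ℤ) (hno : ¬(a = 1 ∧ (b = 1 ∨ b = -2)))
    (h : ℕ) (t : List ℕ) (he : enc (b :: l) = h :: t) :
    enc (a :: b :: l) = (h + 1) :: t := by
  rw [enc, if_neg hno, he]

theorem enc_ne_nil : ∀ (l : List ℤ), l ≠ [] → enc l ≠ [] := by
  intro l hl
  match l with
  | [a] => simp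
  | a :: b :: l =>
    by_cases h : a = 1 ∧ (b = 1 ∨ b = -2)
    · rw [enc_cut a b l h]; simp
    · cases he : enc (b :: l) with
      | nil => exact absurd he (enc_ne_nil (b :: l) (by simp))
      | cons h' t => rw [enc_nocut a b l h h' t he]; simp

theorem enc_pos : ∀ (l : List ℤ), ∀ x ∈ enc l, 0 < x := by
  intro l
  match l with
  | [] => simp
  | [a] => simp
  | a :: b :: l =>
    by_cases h : a = 1 ∧ (b = 1 ∨ b = -2)
    · rw [enc_cut a b l h]
      intro x hx
      rcases List.mem_cons.mp hx with h | h
      · omega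
      · exact enc_pos (b :: l) x h
    · cases he : enc (b :: l) with
      | nil => exact absurd he (enc_ne_nil (b :: l) (by simp))
      | cons h' t =>
        rw [enc_nocut a b l h h' t he]
        intro x hx
        rcases List.mem_cons.mp hx with hh | hh
        · subst hh; omega
        · exact enc_pos (b :: l) x (he ▸ List.mem_cons_of_mem h' hh)

theorem enc_sum : ∀ (l : List ℤ), (enc l).sum = l.length := by
  intro l
  match l with
  | [] => simp
  | [a] => simp
  | a :: b :: l =>
    by_cases h : a = 1 ∧ (b = 1 ∨ b = -2)
    · rw [enc_cut a b l h]
      simp [enc_sum (b :: l)]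
      omega
    · cases he : enc (b :: l) with
      | nil => exact absurd he (enc_ne_nil (b :: l) (by simp))
      | cons h' t =>
        rw [enc_nocut a b l h h' t he]
        have := enc_sum (b :: l)
        rw [he] at this
        simp at this ⊢
        omega

end S13
namespace S13

/-- condition on the continuation for block-cut lemmas -/
def Cont (z : List ℤ) : Prop := z = [] ∨ z.head? = some 1 ∨ z.head? = some (-2)

theorem enc_cut_cont (z : List ℤ) (hz : Cont z) : enc (1 :: z) = 1 :: enc z := by
  rcases hz with h | h | h
  · subst h; simp
  · match z, h with
    | c :: z', h =>
      simp at h; subst h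
      exact enc_cut 1 1 z' ⟨rfl, Or.inl rfl⟩
  · match z, h with
    | c :: z', h =>
      simp at h; subst h
      exact enc_cut 1 (-2) z' ⟨rfl, Or.inr rfl⟩

theorem enc_nocut2 (a : ℤ) (w : List ℤ) (hw : w ≠ [])
    (hno : ¬(a = 1 ∧ (w.head? = some 1 ∨ w.head? = some (-2))))
    (h : ℕ) (t : List ℕ) (he : enc w = h :: t) :
    enc (a :: w) = (h + 1) :: t := by
  match w with
  | b :: l =>
    apply enc_nocut a b l _ h t he
    rintro ⟨ha, hb⟩
    exact hno ⟨ha, by rcases hb with hb | hb <;> subst hb <;> simp⟩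

theorem append_head (z : List ℤ) (a : ℤ) (n : ℕ) (hn : 0 < n) :
    (alt a n ++ z).head? = some a := by
  rw [List.head?_append_of_ne_nil _ (alt_ne_nil a n hn), alt_head a n hn]

theorem enc_alt1_append (k : ℕ) (z : List ℤ) (hz : Cont z) :
    enc (alt 1 (2*k+1) ++ z) = (2*k+1) :: enc z := by
  induction k with
  | zero => simpa [alt] using enc_cut_cont z hz
  | succ k ih =>
    have hwne : alt 1 (2*k+1) ++ z ≠ [] := by
      simp [alt_ne_nil 1 (2*k+1) (by omega)]
    have hwh : (alt 1 (2*k+1) ++ z).head? = some 1 := append_head z 1 (2*k+1) (by omega)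
    have h2 : enc (-1 :: (alt 1 (2*k+1) ++ z)) = (2*k+1+1) :: enc z :=
      enc_nocut2 (-1) _ hwne (by simp) _ _ ih
    have h3 : enc (1 :: -1 :: (alt 1 (2*k+1) ++ z)) = (2*k+1+1+1) :: enc z :=
      enc_nocut2 1 _ (by simp) (by simp) _ _ h2
    have he : alt 1 (2*(k+1)+1) ++ z = 1 :: -1 :: (alt 1 (2*k+1) ++ z) := by
      rw [show 2*(k+1)+1 = (2*k+1)+2 by ring, alt_two]
      simp
    rw [he, h3]
    congr 1

theorem enc_altm1_append (k : ℕ) (z : List ℤ) (hz : Cont z) :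
    enc (alt (-1) (2*k+2) ++ z) = (2*k+2) :: enc z := by
  induction k with
  | zero =>
    have h1 := enc_cut_cont z hz
    have h2 : enc (-1 :: 1 :: z) = (1+1) :: enc z :=
      enc_nocut2 (-1) _ (by simp) (by simp) _ _ h1
    have he : alt (-1) 2 ++ z = -1 :: 1 :: z := by simp [alt]
    rw [he, h2]
  | succ k ih =>
    have hwne : alt (-1) (2*k+2) ++ z ≠ [] := by
      simp [alt_ne_nil (-1) (2*k+2) (by omega)]
    have hwh : (alt (-1) (2*k+2) ++ z).head? = some (-1) :=
      append_head z (-1) (2*k+2) (by omega)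
    have h2 : enc (1 :: (alt (-1) (2*k+2) ++ z)) = (2*k+2+1) :: enc z := by
      apply enc_nocut2 1 _ hwne _ _ _ ih
      rw [hwh]
      rintro ⟨-, hb | hb⟩ <;> simp at hb
    have h3 : enc (-1 :: 1 :: (alt (-1) (2*k+2) ++ z)) = (2*k+2+1+1) :: enc z :=
      enc_nocut2 (-1) _ (by simp) (by simp) _ _ h2
    have he : alt (-1) (2*(k+1)+2) ++ z = -1 :: 1 :: (alt (-1) (2*k+2) ++ z) := by
      rw [show 2*(k+1)+2 = (2*k+2)+2 by ring, alt_two]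
      simp
    rw [he, h3]
    congr 1

theorem enc_blk_append (f : Bool) (m : ℕ) (hm : 0 < m) (z : List ℤ) (hz : Cont z) :
    enc (blk f m ++ z) = m :: enc z := by
  by_cases h : m % 2 = 1
  · obtain ⟨k, hk⟩ : ∃ k, m = 2*k+1 := ⟨m/2, by omega⟩
    rw [blk, if_pos h, hk]
    exact enc_alt1_append k z hz
  · obtain ⟨k, hk⟩ : ∃ k, m = 2*k+2 := ⟨(m-2)/2, by omega⟩
    rw [blk, if_neg h]
    cases f
    · simp only [Bool.false_eq_true, if_false]
      have h1 : m - 1 = 2*k+1 := by omega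
      rw [h1]
      have hwne : alt 1 (2*k+1) ++ z ≠ [] := by
        simp [alt_ne_nil 1 (2*k+1) (by omega)]
      have h2 : enc (-2 :: (alt 1 (2*k+1) ++ z)) = (2*k+1+1) :: enc z :=
        enc_nocut2 (-2) _ hwne (by simp) _ _ (enc_alt1_append k z hz)
      rw [List.cons_append, h2, hk]
    · simp only [if_true]
      rw [hk]
      exact enc_altm1_append k z hz

theorem enc_body (c : List ℕ) (hpos : ∀ x ∈ c, 0 < x) :
    ∀ f, enc (body f c) = c := by
  induction c with
  | nil => intro f; rfl
  | cons m r ih =>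
    intro f
    have hz : Cont (body false r) := body_head_false r (fun x hx => hpos x (by simp [hx]))
    rw [body, enc_blk_append f m (hpos m (by simp)) _ hz,
      ih (fun x hx => hpos x (by simp [hx])) false]

end S13
namespace S13

/-- proper nonempty prefix sums -/
def PS (c : List ℕ) (s : ℕ) : Prop := ∃ t, t <+: c ∧ t ≠ [] ∧ t ≠ c ∧ t.sum = s

theorem PS_nil (s : ℕ) : ¬ PS [] s := by
  rintro ⟨t, ht, hne, -, -⟩
  simp [List.prefix_nil] at ht
  exact hne ht

theorem PS_cons (h : ℕ) (t : List ℕ) (s : ℕ) :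
    PS (h :: t) s ↔ (s = h ∧ t ≠ []) ∨ (∃ s', PS t s' ∧ s = h + s') := by
  constructor
  · rintro ⟨t', ht', hne, hproper, hsum⟩
    rcases List.prefix_cons_iff.mp ht' with h1 | ⟨t'', rfl, ht''⟩
    · exact absurd h1 hne
    · cases t'' with
      | nil =>
        left
        refine ⟨by simpa using hsum.symm, ?_⟩
        intro hteq
        exact hproper (by rw [hteq])
      | cons x xs =>
        right
        refine ⟨(x :: xs).sum, ⟨x :: xs, ht'', by simp, ?_, rfl⟩, by simp [← hsum]⟩
        intro heq
        exact hproper (by rw [heq])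
  · rintro (⟨hs, hne⟩ | ⟨s', ⟨t', ht', hne', hproper', rfl⟩, rfl⟩)
    · exact ⟨[h], by simp, by simp, by simpa using hne, by simp [hs]⟩
    · refine ⟨h :: t', by simpa using ht', by simp, ?_, by simp⟩
      simpa using hproper'

theorem PS_pos (c : List ℕ) (hpos : ∀ x ∈ c, 0 < x) (s : ℕ) (hs : PS c s) : 0 < s := by
  obtain ⟨t, ht, hne, -, rfl⟩ := hs
  match t, hne with
  | x :: t', _ =>
    have hx : 0 < x := hpos x (ht.subset (by simp))
    simp only [List.sum_cons]
    omega

theorem cutsSet_nil (s : ℕ) : s ∉ cutsSet ([] : List ℤ) := by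
  rintro ⟨h1, h2, -⟩
  simp at h2

theorem cutsSet_cons (a : ℤ) (M : List ℤ) (s : ℕ) :
    s ∈ cutsSet (a :: M) ↔
      (s = 1 ∧ M ≠ [] ∧ a = 1 ∧ (M.head? = some 1 ∨ M.head? = some (-2))) ∨
      (2 ≤ s ∧ (s - 1) ∈ cutsSet M) := by
  constructor
  · rintro ⟨h1, h2, h3, h4⟩
    match s, h1 with
    | 1, _ =>
      left
      simp only [List.length_cons] at h2
      refine ⟨rfl, by intro h; subst h; simp at h2, ?_, ?_⟩
      · simpa using h3
      · cases M with
        | nil => simp at h2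
        | cons b M' => simpa using h4
    | (k + 2), _ =>
      right
      refine ⟨by omega, ?_, ?_, ?_⟩
      · omega
      · simp only [List.length_cons] at h2; omega
      · constructor
        · have : (a :: M)[k + 1]? = M[k]? := List.getElem?_cons_succ
          rw [show k + 2 - 1 = k + 1 from rfl] at h3
          rw [show k + 2 - 1 - 1 = k from rfl]
          rwa [this] at h3
        · have : (a :: M)[k + 2]? = M[k + 1]? := List.getElem?_cons_succ
          rw [show k + 2 - 1 = k + 1 from rfl]
          rwa [this] at h4
  · rintro (⟨rfl, hM, rfl, hh⟩ | ⟨hs2, h1, h2, h3, h4⟩)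
    · refine ⟨by omega, ?_, by simp, ?_⟩
      · simp only [List.length_cons]
        cases M with
        | nil => simp at hM
        | cons b M' => simp
      · cases M with
        | nil => simp at hM
        | cons b M' => simpa using hh
    · match s, hs2 with
      | (k + 2), _ =>
        refine ⟨by omega, by simp only [List.length_cons]; omega, ?_, ?_⟩
        · rw [show k + 2 - 1 = k + 1 from rfl, List.getElem?_cons_succ]
          rwa [show k + 2 - 1 - 1 = k from rfl] at h3
        · rw [List.getElem?_cons_succ]
          rwa [show k + 2 - 1 = k + 1 from rfl] at h4

theorem enc_cuts : ∀ (l : List ℤ) (s : ℕ), PS (enc l) s ↔ s ∈ cutsSet l := by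
  intro l
  match l with
  | [] => intro s; simp only [enc_nil]; exact ⟨fun h => absurd h (PS_nil s), fun h => absurd h (cutsSet_nil s)⟩
  | [a] =>
    intro s
    simp only [enc_single]
    constructor
    · intro h
      rw [PS_cons] at h
      rcases h with ⟨-, hh⟩ | ⟨s', hs', -⟩
      · exact absurd rfl hh
      · exact absurd hs' (PS_nil s')
    · rintro ⟨h1, h2, -⟩
      simp at h2
      omega
  | a :: b :: M =>
    intro s
    have IH := enc_cuts (b :: M)
    by_cases hc : a = 1 ∧ (b = 1 ∨ b = -2)
    · rw [enc_cut a b M hc, PS_cons, cutsSet_cons]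
      have hEne : enc (b :: M) ≠ [] := enc_ne_nil (b :: M) (by simp)
      constructor
      · rintro (⟨rfl, -⟩ | ⟨s', hs', rfl⟩)
        · exact Or.inl ⟨rfl, by simp, hc.1, by simpa using hc.2⟩
        · have hp := PS_pos _ (enc_pos (b :: M)) s' hs'
          exact Or.inr ⟨by omega, by rw [show 1 + s' - 1 = s' by omega]; exact (IH s').mp hs'⟩
      · rintro (⟨rfl, -⟩ | ⟨hs2, hcut⟩)
        · exact Or.inl ⟨rfl, hEne⟩
        · right
          refine ⟨s - 1, (IH (s-1)).mpr hcut, by omega⟩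
    · cases hE : enc (b :: M) with
      | nil => exact absurd hE (enc_ne_nil (b :: M) (by simp))
      | cons h t =>
        rw [enc_nocut a b M hc h t hE, PS_cons, cutsSet_cons]
        have hh1 : 0 < h := enc_pos (b :: M) h (by rw [hE]; simp)
        have IH' : ∀ s', PS (h :: t) s' ↔ s' ∈ cutsSet (b :: M) := by
          intro s'; rw [← hE]; exact IH s'
        constructor
        · rintro (⟨rfl, htne⟩ | ⟨s', hs', rfl⟩)
          · refine Or.inr ⟨by omega, ?_⟩
            rw [show h + 1 - 1 = h by omega]
            exact (IH' h).mp (by rw [PS_cons]; exact Or.inl ⟨rfl, htne⟩)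
          · have hp := PS_pos t (fun x hx => enc_pos (b :: M) x (by rw [hE]; simp [hx])) s' hs'
            refine Or.inr ⟨by omega, ?_⟩
            rw [show h + 1 + s' - 1 = h + s' by omega]
            exact (IH' (h + s')).mp (by rw [PS_cons]; exact Or.inr ⟨s', hs', rfl⟩)
        · rintro (⟨-, -, ha, hb⟩ | ⟨hs2, hcut⟩)
          · exact absurd ⟨ha, by cases M <;> simp_all⟩ hc
          · have := (IH' (s - 1)).mpr hcut
            rw [PS_cons] at this
            rcases this with ⟨hsh, htne⟩ | ⟨s', hs', hss⟩
            · exact Or.inl ⟨by omega, htne⟩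
            · have hp := PS_pos t (fun x hx => enc_pos (b :: M) x (by rw [hE]; simp [hx])) s' hs'
              exact Or.inr ⟨s', hs', by omega⟩

theorem enc_cutComp (l : List ℤ) : CutComp l (enc l) :=
  ⟨⟨enc_pos l, enc_sum l⟩, fun s => enc_cuts l s⟩

end S13
namespace S13

theorem blk_odd_eq (f : Bool) (m : ℕ) (h : m % 2 = 1) : blk f m = alt 1 m := by
  rw [blk, if_pos h]

theorem blk_one (f : Bool) : blk f 1 = [1] := by simp [blk, alt]

theorem blk_true_two : blk true 2 = [-1, 1] := by simp [blk, alt]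

theorem blk_false_two : blk false 2 = [-2, 1] := by simp [blk, alt]

theorem blk_true_even (m : ℕ) (h : m % 2 = 0) : blk true (m+2) = -1 :: 1 :: blk true m := by
  have h1 : ¬((m + 2) % 2 = 1) := by omega
  have h2 : ¬(m % 2 = 1) := by omega
  simp only [blk, h1, h2, if_false, if_true]
  rw [alt_two]
  norm_num

theorem blk_false_even (m : ℕ) (h : m % 2 = 0) : blk false (m+2) = -2 :: 1 :: blk true m := by
  have h1 : ¬((m + 2) % 2 = 1) := by omega
  have h2 : ¬(m % 2 = 1) := by omega
  simp only [blk, h1, h2, if_false, if_true, Bool.false_eq_true]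
  rw [show m + 2 - 1 = m + 1 from rfl, alt_succ]

theorem blk_odd_two (f : Bool) (m : ℕ) (h : m % 2 = 1) : blk f (m+2) = 1 :: -1 :: blk f m := by
  have h1 : (m + 2) % 2 = 1 := by omega
  rw [blk_odd_eq f (m+2) h1, blk_odd_eq f m h, alt_two]

theorem body_false_odd (m : ℕ) (r : List ℕ) (h : m % 2 = 1) :
    body false (m :: r) = body true (m :: r) := by
  simp [body, blk_odd_eq _ _ h]

theorem altParity_shift (m : ℕ) (r : List ℕ) (h : AltParity (m :: r)) :
    AltParity ((m + 2) :: r) := by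
  unfold AltParity at *
  cases r with
  | nil => simp
  | cons m2 r2 =>
    rw [List.chain'_cons] at h ⊢
    exact ⟨by omega, h.2⟩

/-- Validity of an inner-word suffix starting at height `h`. -/
def Valid (h : ℤ) (l : List ℤ) : Prop :=
  (∀ s ∈ l, s = 1 ∨ s ≤ -1) ∧ List.Chain' R l ∧
  (∀ i, 0 ≤ h + (l.take i).sum ∧ h + (l.take i).sum ≤ 2) ∧
  (h + l.sum = 1 ∨ h + l.sum = 2) ∧ (l ≠ [] → l.getLast? = some 1)

theorem valid_tail {h a : ℤ} {l : List ℤ} (hv : Valid h (a :: l)) : Valid (h + a) l := by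
  obtain ⟨hmem, hchain, hbd, hsum, hlast⟩ := hv
  refine ⟨fun s hs => hmem s (by simp [hs]), hchain.tail, ?_, ?_, ?_⟩
  · intro i
    have := hbd (i + 1)
    rw [List.take_succ_cons, List.sum_cons] at this
    constructor <;> omega
  · rw [List.sum_cons] at hsum
    omega
  · intro hne
    have := hlast (by simp)
    cases l with
    | nil => exact absurd rfl hne
    | cons b l' => rwa [List.getLast?_cons_cons] at this

theorem valid_of_eq {h h' : ℤ} {l : List ℤ} (e : h = h') (hv : Valid h l) : Valid h' l :=
  e ▸ hv

theorem key : ∀ (N : ℕ) (l : List ℤ), l.length ≤ N →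
    ((Valid 1 l → ∀ first : Bool, (first = false → l.head? ≠ some (-1)) →
        ∃ c, (∀ x ∈ c, 0 < x) ∧ AltParity c ∧
          (first = false → ∀ m ∈ c.head?, m % 2 = 1) ∧ body first c = l) ∧
     (Valid 2 l → l.head? ≠ some (-1) →
        ∃ c, (∀ x ∈ c, 0 < x) ∧ AltParity c ∧
          (∀ m ∈ c.head?, m % 2 = 0) ∧ body false c = l)) := by
  intro N
  induction N with
  | zero =>
    intro l hlen
    have hl : l = [] := List.length_eq_zero_iff.mp (by omega)
    subst hl
    exact ⟨fun _ _ _ => ⟨[], by simp, by simp [AltParity], by simp, rfl⟩,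
           fun _ _ => ⟨[], by simp, by simp [AltParity], by simp, rfl⟩⟩
  | succ N ih =>
    intro l hlen
    cases l with
    | nil =>
      exact ⟨fun _ _ _ => ⟨[], by simp, by simp [AltParity], by simp, rfl⟩,
             fun _ _ => ⟨[], by simp, by simp [AltParity], by simp, rfl⟩⟩
    | cons a l2 =>
      constructor
      · -- P part : Valid 1 (a :: l2)
        intro hv first hfirst
        obtain ⟨hmem, hchain, hbd, hsum, hlast⟩ := hv
        have ha : a = 1 ∨ a = -1 := by
          have h1 := hmem a (by simp)
          have h2 := (hbd 1).1
          simp at h2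
          omega
        rcases ha with ha | ha
        · -- a = 1
          subst ha
          cases l2 with
          | nil =>
            refine ⟨[1], by simp, by simp [AltParity], by simp, ?_⟩
            cases first <;> simp [body, blk_one]
          | cons b l3 =>
            have hb : b = -1 ∨ b = -2 := by
              have h1 := hmem b (by simp)
              have h2 := (hbd 2).1
              have h3 := (hbd 2).2
              simp [List.take_succ_cons] at h2 h3
              omega
            rcases hb with hb | hb
            · -- 1 :: -1 :: l3
              subst hb
              have hl3ne : l3 ≠ [] := by
                intro h
                subst h
                have := hlast (by simp)
                simp at this
              have hVal3 : Valid 1 l3 := by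
                have v1 := valid_tail ⟨hmem, hchain, hbd, hsum, hlast⟩
                have v2 := valid_tail v1
                exact valid_of_eq (by norm_num) v2
              have hhead3 : l3.head? = some 1 := by
                cases l3 with
                | nil => exact absurd rfl hl3ne
                | cons x l4 =>
                  have hcc := hchain
                  rw [List.chain'_cons, List.chain'_cons] at hcc
                  rcases hcc.2.1 with h | h
                  · omega
                  · simp [h]
              obtain ⟨c3, hpos3, halt3, hodd3, hbody3⟩ :=
                ((ih l3 (by simp at hlen; omega)).1 hVal3 false
                  (fun _ => by rw [hhead3]; simp))
              have hc3ne : c3 ≠ [] := by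
                intro h
                subst h
                exact hl3ne (by rw [← hbody3]; rfl)
              match c3, hc3ne with
              | m :: r, _ =>
                have hmodd : m % 2 = 1 := hodd3 rfl m rfl
                refine ⟨(m + 2) :: r, ?_, altParity_shift m r halt3, ?_, ?_⟩
                · intro x hx
                  rcases List.mem_cons.mp hx with h | h
                  · omega
                  · exact hpos3 x (by simp [h])
                · intro _ m' hm'
                  simp at hm'
                  omega
                · rw [body, blk_odd_two first m hmodd]
                  rw [body, blk_odd_eq false m hmodd, ← blk_odd_eq first m hmodd] at hbody3
                  simp only [List.cons_append]
                  rw [hbody3]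
            · -- 1 :: -2 :: l3
              subst hb
              have hVal2 : Valid 2 (-2 :: l3) := by
                have v1 := valid_tail ⟨hmem, hchain, hbd, hsum, hlast⟩
                exact valid_of_eq (by norm_num) v1
              obtain ⟨c', hpos', halt', heven', hbody'⟩ :=
                (ih (-2 :: l3) (by simp at hlen ⊢; omega)).2 hVal2 (by simp)
              have hc'ne : c' ≠ [] := by
                intro h
                subst h
                simp [body] at hbody'
              refine ⟨1 :: c', ?_, ?_, by simp, ?_⟩
              · intro x hx
                rcases List.mem_cons.mp hx with h | h
                · omega
                · exact hpos' x h
              · unfold AltParity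
                rw [List.chain'_cons']
                refine ⟨?_, halt'⟩
                intro m' hm'
                have := heven' m' hm'
                omega
              · rw [body, blk_one]
                rw [hbody']
                simp
        · -- a = -1 : first even block
          subst ha
          have hf : first = true := by
            cases first
            · exact absurd rfl (hfirst rfl)
            · rfl
          subst hf
          have hl2ne : l2 ≠ [] := by
            intro h
            subst h
            have := hlast (by simp)
            simp at this
          match l2, hl2ne with
          | b :: l3, _ =>
            have hb : b = 1 := by
              rw [List.chain'_cons] at hchain
              rcases hchain.1 with h | h
              · omega
              · exact h
            subst hb
            have hVal3 : Valid 1 l3 := by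
              have v1 := valid_tail ⟨hmem, hchain, hbd, hsum, hlast⟩
              have v2 := valid_tail v1
              exact valid_of_eq (by norm_num) v2
            obtain ⟨c3, hpos3, halt3, -, hbody3⟩ :=
              ((ih l3 (by simp at hlen; omega)).1 hVal3 true (by simp))
            cases c3 with
            | nil =>
              have hl3 : l3 = [] := by rw [← hbody3]; rfl
              subst hl3
              refine ⟨[2], by simp, by simp [AltParity], by simp, ?_⟩
              simp [body, blk_true_two]
            | cons m r =>
              by_cases hm2 : m % 2 = 0
              · refine ⟨(m + 2) :: r, ?_, altParity_shift m r halt3, by simp, ?_⟩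
                · intro x hx
                  rcases List.mem_cons.mp hx with h | h
                  · omega
                  · exact hpos3 x (by simp [h])
                · rw [body, blk_true_even m hm2]
                  rw [body] at hbody3
                  simp only [List.cons_append]
                  rw [hbody3]
              · refine ⟨2 :: m :: r, ?_, ?_, by simp, ?_⟩
                · intro x hx
                  rcases List.mem_cons.mp hx with h | h
                  · omega
                  · exact hpos3 x h
                · unfold AltParity at halt3 ⊢
                  rw [List.chain'_cons]
                  exact ⟨by omega, halt3⟩
                · rw [body, blk_true_two, body_false_odd m r (by omega), hbody3]
                  simp
      · -- Q part : Valid 2 (a :: l2)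
        intro hv hhead
        obtain ⟨hmem, hchain, hbd, hsum, hlast⟩ := hv
        have ha : a = -2 := by
          have h1 := hmem a (by simp)
          have h2 := (hbd 1).1
          have h3 := (hbd 1).2
          simp at h2 h3
          have : a ≠ -1 := by
            intro h
            subst h
            exact hhead (by simp)
          omega
        subst ha
        have hl2ne : l2 ≠ [] := by
          intro h
          subst h
          have := hlast (by simp)
          simp at this
        match l2, hl2ne with
        | b :: l3, _ =>
          have hb : b = 1 := by
            rw [List.chain'_cons] at hchain
            rcases hchain.1 with h | h
            · omega
            · exact h
          subst hb
          have hVal3 : Valid 1 l3 := by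
            have v1 := valid_tail ⟨hmem, hchain, hbd, hsum, hlast⟩
            have v2 := valid_tail v1
            exact valid_of_eq (by norm_num) v2
          obtain ⟨c3, hpos3, halt3, -, hbody3⟩ :=
            ((ih l3 (by simp at hlen; omega)).1 hVal3 true (by simp))
          cases c3 with
          | nil =>
            have hl3 : l3 = [] := by rw [← hbody3]; rfl
            subst hl3
            refine ⟨[2], by simp, by simp [AltParity], by simp, ?_⟩
            simp [body, blk_false_two]
          | cons m r =>
            by_cases hm2 : m % 2 = 0
            · refine ⟨(m + 2) :: r, ?_, altParity_shift m r halt3,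
                (by intro m' hm'; simp at hm'; omega), ?_⟩
              · intro x hx
                rcases List.mem_cons.mp hx with h | h
                · omega
                · exact hpos3 x (by simp [h])
              · rw [body, blk_false_even m hm2]
                rw [body] at hbody3
                simp only [List.cons_append]
                rw [hbody3]
            · refine ⟨2 :: m :: r, ?_, ?_, by simp, ?_⟩
              · intro x hx
                rcases List.mem_cons.mp hx with h | h
                · omega
                · exact hpos3 x h
              · unfold AltParity at halt3 ⊢
                rw [List.chain'_cons]
                exact ⟨by omega, halt3⟩
              · rw [body, blk_false_two, body_false_odd m r (by omega), hbody3]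
                simp

end S13
namespace S13

theorem exists_decode (p : List ℤ) (hg : IsGDAP p) (hne : p ≠ []) (hb : Bounded02 p) :
    ∃ c, (∀ x ∈ c, 0 < x) ∧ AltParity c ∧ decode c = p := by
  obtain ⟨⟨hmem, hchain⟩, hsum⟩ := hg
  match p, hne with
  | a :: q, _ =>
    have ha : a = 1 := by
      have h1 := hmem a (by simp)
      have h2 := (hb 1).1
      simp at h2
      omega
    subst ha
    have hq : q ≠ [] := by
      intro h
      subst h
      simp at hsum
    set l := q.dropLast with hl
    set d := q.getLast hq with hd
    have hql : l ++ [d] = q := List.dropLast_append_getLast hq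
    -- the sum of l
    have hSl : (1 : ℤ) + l.sum + d = 0 := by
      rw [← hql] at hsum
      simp at hsum
      omega
    have hbl : 0 ≤ 1 + l.sum ∧ 1 + l.sum ≤ 2 := by
      have := hb (l.length + 1)
      rw [← hql, List.take_succ_cons, List.take_append,
        Nat.sub_self, List.take_zero, List.append_nil, List.take_of_length_le le_rfl,
        List.sum_cons] at this
      exact this
    have hdmem : d = 1 ∨ d ≤ -1 := hmem d (by rw [← hql]; simp)
    have hd12 : d = -1 ∨ d = -2 := by omega
    have hValid : Valid 1 l := by
      refine ⟨?_, ?_, ?_, ?_, ?_⟩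
      · intro s hs
        exact hmem s (by rw [← hql]; simp [hs])
      · have := hchain.tail
        simp only [List.tail_cons] at this
        rw [← hql, List.chain'_append] at this
        exact this.1
      · intro i
        by_cases hi : i ≤ l.length
        · have := hb (i + 1)
          rw [← hql, List.take_succ_cons, List.take_append,
            show i - l.length = 0 by omega, List.take_zero, List.append_nil,
            List.sum_cons] at this
          exact this
        · rw [List.take_of_length_le (by omega)]
          omega
      · omega
      · intro hlne
        have hc := hchain.tail
        simp only [List.tail_cons] at hc
        rw [← hql, List.chain'_append] at hc
        have hj := hc.2.2
        cases hgl : l.getLast? with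
        | none => simp [List.getLast?_eq_none_iff] at hgl; exact absurd hgl hlne
        | some x =>
          have := hj x (by simp [hgl]) d (by simp)
          rcases this with h | h
          · rw [h]
          · omega
    obtain ⟨c, hpos, halt, -, hbody⟩ :=
      (key l.length l le_rfl).1 hValid true (by simp)
    refine ⟨c, hpos, halt, ?_⟩
    rw [decode, hbody]
    rw [show -(1 + l.sum) = d by omega, List.cons_append, hql]

end S13


/-- for `n ≥ 2` there is a bijection `ψ` from GDAP of length `n` bounded by
`y = 0` and `y = 2` onto compositions of `n-2` with no two consecutive parts of the same
parity, obtained by deleting the first and last steps and recording the block lengths of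
the cutting decomposition. -/
theorem stmt13 : ∀ n : ℕ, 2 ≤ n →
    ∃ ψ : {p : List ℤ // IsGDAP p ∧ p ≠ [] ∧ Bounded02 p ∧ p.length = n} ≃
          {c : List ℕ // IsComposition c (n - 2) ∧ AltParity c},
      ∀ p : {p : List ℤ // IsGDAP p ∧ p ≠ [] ∧ Bounded02 p ∧ p.length = n},
        CutComp (p.1.tail.dropLast) (ψ p).1 := by
  intro n hn
  have innerEq : ∀ p : List ℤ, ∀ c : List ℕ, S13.decode c = p →
      p.tail.dropLast = S13.body true c := by
    intro p c h
    rw [← h, S13.decode_inner]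
  have hWd : ∀ p : {p : List ℤ // IsGDAP p ∧ p ≠ [] ∧ Bounded02 p ∧ p.length = n},
      IsComposition (S13.enc (p.1.tail.dropLast)) (n - 2) ∧
        AltParity (S13.enc (p.1.tail.dropLast)) := by
    rintro ⟨p, hg, hne, hb, hlen⟩
    obtain ⟨c, hpos, halt, hdec⟩ := S13.exists_decode p hg hne hb
    have hinner : p.tail.dropLast = S13.body true c := innerEq p c hdec
    simp only []
    constructor
    · refine ⟨S13.enc_pos _, ?_⟩
      rw [S13.enc_sum]
      rw [List.length_dropLast, List.length_tail, hlen]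
      omega
    · rw [hinner, S13.enc_body c hpos true]
      exact halt
  have hGd : ∀ c : {c : List ℕ // IsComposition c (n - 2) ∧ AltParity c},
      IsGDAP (S13.decode c.1) ∧ S13.decode c.1 ≠ [] ∧ Bounded02 (S13.decode c.1) ∧
        (S13.decode c.1).length = n := by
    rintro ⟨c, ⟨hpos, hcsum⟩, halt⟩
    simp only []
    refine ⟨⟨S13.decode_good c hpos halt, S13.decode_sum c⟩, S13.decode_ne_nil c,
      S13.decode_bounded c hpos halt, ?_⟩
    rw [S13.decode_length c hpos, hcsum]
    omega
  refine ⟨⟨fun p => ⟨S13.enc (p.1.tail.dropLast), hWd p⟩,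
           fun c => ⟨S13.decode c.1, hGd c⟩, ?_, ?_⟩, ?_⟩
  · rintro ⟨p, hg, hne, hb, hlen⟩
    apply Subtype.ext
    simp only []
    obtain ⟨c, hpos, halt, hdec⟩ := S13.exists_decode p hg hne hb
    rw [innerEq p c hdec, S13.enc_body c hpos true, hdec]
  · rintro ⟨c, ⟨hpos, hcsum⟩, halt⟩
    apply Subtype.ext
    simp only []
    rw [S13.decode_inner, S13.enc_body c hpos true]
  · intro p
    exact S13.enc_cutComp _
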